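/- Let (H, B) be a cocommutative Rota-Baxter Hopf algebra with T(g) := S(B(g₍₁₎))·S(g₍₂₎)·B(g₍₃₎). Then for all h ∈ H: (i) B(h₍₁₎)·B(T(h₍₂₎)) = ε(h)1, and (ii) B∘T = S∘B. -/

import Mathlib

open scoped TensorProduct
open Coalgebra

variable (R H : Type*) [CommRing R] [AddCommGroup H] [Module R H] [Coalgebra R H]

/-- A Hopf algebra structure (multiplication, unit, antipode) on the coalgebra `H`:
the multiplication is associative with unit, comultiplication and counit are algebra
maps, and `S` is an antipode (expressed via arbitrary Sweedler representations). -/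
structure HopfMul where
  mul : H →ₗ[R] H →ₗ[R] H
  one : H
  S : H →ₗ[R] H
  mul_assoc : ∀ a b c : H, mul (mul a b) c = mul a (mul b c)
  one_mul : ∀ a : H, mul one a = a
  mul_one : ∀ a : H, mul a one = a
  comul_mul : ∀ (a b : H) {ι₁ ι₂ : Type*} (ra : Coalgebra.Repr R a ι₁) (rb : Coalgebra.Repr R b ι₂),
    comul (R := R) (mul a b) = ∑ i ∈ ra.index, ∑ j ∈ rb.index,
      mul (ra.left i) (rb.left j) ⊗ₜ[R] mul (ra.right i) (rb.right j)
  comul_one : comul (R := R) one = one ⊗ₜ[R] one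
  counit_mul : ∀ a b : H, counit (R := R) (mul a b) = counit (R := R) a * counit (R := R) b
  counit_one : counit (R := R) one = 1
  S_mul_left : ∀ (a : H) {ι : Type*} (r : Coalgebra.Repr R a ι),
    ∑ i ∈ r.index, mul (S (r.left i)) (r.right i) = counit (R := R) a • one
  S_mul_right : ∀ (a : H) {ι : Type*} (r : Coalgebra.Repr R a ι),
    ∑ i ∈ r.index, mul (r.left i) (S (r.right i)) = counit (R := R) a • one

/-- Cocommutativity of the coalgebra `H`. -/
def Cocomm : Prop :=
  ∀ a : H, TensorProduct.comm R H H (comul (R := R) a) = comul (R := R) a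

/-- A Rota-Baxter operator on the (cocommutative) Hopf algebra `(H, h)`: a coalgebra
homomorphism `B` satisfying `B(a)B(b) = B(a₍₁₎·B(a₍₂₎)·b·S(B(a₍₃₎)))`. -/
structure RotaBaxter (h : HopfMul R H) where
  B : H →ₗ[R] H
  comul_B : ∀ (a : H) {ι : Type*} (r : Coalgebra.Repr R a ι),
    comul (R := R) (B a) = ∑ i ∈ r.index, B (r.left i) ⊗ₜ[R] B (r.right i)
  counit_B : ∀ a : H, counit (R := R) (B a) = counit (R := R) a
  rb : ∀ (a b : H) {ι : Type*} (r : Coalgebra.Repr R a ι)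
      {κ : ι → Type*} (r2 : ∀ i : ι, Coalgebra.Repr R (r.right i) (κ i)),
    h.mul (B a) (B b) = ∑ i ∈ r.index, ∑ j ∈ (r2 i).index,
      B (h.mul (h.mul (h.mul (r.left i) (B ((r2 i).left j))) b)
        (h.S (B ((r2 i).right j))))

section Aux
variable {R H : Type*} [CommRing R] [AddCommGroup H] [Module R H] [Coalgebra R H]
variable {M N : Type*} [AddCommGroup M] [Module R M] [AddCommGroup N] [Module R N]

/-- Sweedler evaluation: `Ebil F a = ∑ F a₁ a₂`. -/
noncomputable def Ebil : (H →ₗ[R] H →ₗ[R] M) →ₗ[R] H →ₗ[R] M :=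
  ((LinearMap.llcomp R H (H ⊗[R] H) M).flip (comul (R := R))) ∘ₗ TensorProduct.uncurry (RingHom.id R) H H M

lemma Ebil_apply (F : H →ₗ[R] H →ₗ[R] M) (a : H) :
    Ebil F a = TensorProduct.uncurry (RingHom.id R) H H M F (comul (R := R) a) := rfl

lemma repr_sum (F : H →ₗ[R] H →ₗ[R] M) {a : H} {ι : Type*} (r : Coalgebra.Repr R a ι) :
    ∑ i ∈ r.index, F (r.left i) (r.right i) = Ebil F a := by
  rw [Ebil_apply, ← r.eq, map_sum]
  simp

lemma Ebil_congr {F G : H →ₗ[R] H →ₗ[R] M} (a : H) (hfg : ∀ x y, F x y = G x y) :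
    Ebil F a = Ebil G a := by
  have : F = G := LinearMap.ext₂ hfg
  rw [this]

lemma Ebil_map (L : M →ₗ[R] N) (F : H →ₗ[R] H →ₗ[R] M) (a : H) :
    Ebil (F.compr₂ L) a = L (Ebil F a) := by
  rw [Ebil_apply, Ebil_apply]
  induction (comul (R := R) a) using TensorProduct.induction_on with
  | zero => simp
  | tmul x y => simp
  | add x y hx hy => simp [map_add, hx, hy]

lemma Ebil_comm (hc : Cocomm R H) {F G : H →ₗ[R] H →ₗ[R] M} (a : H)
    (hfg : ∀ x y, F x y = G y x) : Ebil F a = Ebil G a := by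
  rw [Ebil_apply, Ebil_apply]
  have h2 : ∀ t : H ⊗[R] H, TensorProduct.uncurry (RingHom.id R) H H M F (TensorProduct.comm R H H t)
      = TensorProduct.uncurry (RingHom.id R) H H M G t := by
    intro t
    induction t using TensorProduct.induction_on with
    | zero => simp
    | tmul x y => simpa using hfg y x
    | add x y hx hy => simp only [map_add, hx, hy]
  conv_lhs => rw [← hc a]
  exact h2 _

lemma Ebil_eps_left {F : H →ₗ[R] H →ₗ[R] M} (G : H →ₗ[R] M) (a : H)
    (hfg : ∀ x y, F x y = counit (R := R) x • G y) : Ebil F a = G a := by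
  rw [Ebil_apply]
  have h2 : ∀ t : H ⊗[R] H, TensorProduct.uncurry (RingHom.id R) H H M F t
      = G (TensorProduct.lid R H ((counit (R := R)).rTensor H t)) := by
    intro t
    induction t using TensorProduct.induction_on with
    | zero => simp
    | tmul x y => simp [hfg]
    | add x y hx hy => simp [map_add, hx, hy]
  rw [h2, rTensor_counit_comul]
  simp

lemma Ebil_eps_right {F : H →ₗ[R] H →ₗ[R] M} (G : H →ₗ[R] M) (a : H)
    (hfg : ∀ x y, F x y = counit (R := R) y • G x) : Ebil F a = G a := by
  rw [Ebil_apply]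
  have h2 : ∀ t : H ⊗[R] H, TensorProduct.uncurry (RingHom.id R) H H M F t
      = G (TensorProduct.rid R H ((counit (R := R)).lTensor H t)) := by
    intro t
    induction t using TensorProduct.induction_on with
    | zero => simp
    | tmul x y => simp [hfg]
    | add x y hx hy => simp [map_add, hx, hy]
  rw [h2, lTensor_counit_comul]
  simp

lemma Ebil_assoc (P Q : H →ₗ[R] H →ₗ[R] H →ₗ[R] M)
    (hPQ : ∀ x y z, Q z x y = P x y z) {F G : H →ₗ[R] H →ₗ[R] M} (a : H)
    (hF : ∀ x y, F x y = Ebil (P x) y) (hG : ∀ x y, G x y = Ebil (Q y) x) :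
    Ebil G a = Ebil F a := by
  classical
  set r := Coalgebra.Repr.arbitrary R a with hr
  have key := Coalgebra.sum_tmul_tmul_eq r (fun i => Coalgebra.Repr.arbitrary R (r.left i))
    (fun i => Coalgebra.Repr.arbitrary R (r.right i))
  set φ : H ⊗[R] (H ⊗[R] H) →ₗ[R] M :=
    TensorProduct.lift ((TensorProduct.uncurry (RingHom.id R) H H M) ∘ₗ P) with hφ
  have hφt : ∀ x y z : H, φ (x ⊗ₜ[R] (y ⊗ₜ[R] z)) = P x y z := by intros; simp [hφ]
  have := congrArg φ key
  simp only [map_sum, hφt] at this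
  calc Ebil G a = ∑ i ∈ r.index, G (r.left i) (r.right i) := (repr_sum G r).symm
    _ = ∑ i ∈ r.index, ∑ j ∈ (Coalgebra.Repr.arbitrary R (r.left i)).index,
        P ((Coalgebra.Repr.arbitrary R (r.left i)).left j)
          ((Coalgebra.Repr.arbitrary R (r.left i)).right j) (r.right i) := by
        refine Finset.sum_congr rfl fun i _ => ?_
        rw [hG, ← repr_sum (Q (r.right i)) (Coalgebra.Repr.arbitrary R (r.left i))]
        exact Finset.sum_congr rfl fun j _ => hPQ _ _ _
    _ = ∑ i ∈ r.index, ∑ j ∈ (Coalgebra.Repr.arbitrary R (r.right i)).index,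
        P (r.left i) ((Coalgebra.Repr.arbitrary R (r.right i)).left j)
          ((Coalgebra.Repr.arbitrary R (r.right i)).right j) := this
    _ = ∑ i ∈ r.index, F (r.left i) (r.right i) := by
        refine Finset.sum_congr rfl fun i _ => ?_
        rw [hF, ← repr_sum (P (r.left i)) (Coalgebra.Repr.arbitrary R (r.right i))]
    _ = Ebil F a := repr_sum F r

end Aux

universe w

section Reindex
variable {R H : Type*} [CommRing R] [AddCommGroup H] [Module R H] [CoalgebraStruct R H]

/-- Reindex a representation to put its index type in an arbitrary universe. -/
noncomputable def Coalgebra.Repr.reindex {ι : Type*} {a : H} (r : Coalgebra.Repr R a ι) :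
    Coalgebra.Repr R a (ULift.{w} (Fin r.index.card)) where
  index := Finset.univ
  left := fun i => r.left (r.index.equivFin.symm i.down)
  right := fun i => r.right (r.index.equivFin.symm i.down)
  eq := by
    rw [← r.eq, ← Finset.sum_coe_sort r.index (fun i => r.left i ⊗ₜ[R] r.right i)]
    rw [← Equiv.sum_comp r.index.equivFin.symm
      (fun i => r.left i.1 ⊗ₜ[R] r.right i.1)]
    exact Equiv.sum_comp (Equiv.ulift.{w})
      (fun j => r.left (r.index.equivFin.symm j) ⊗ₜ[R] r.right (r.index.equivFin.symm j))

end Reindex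

section Hopf
variable {R H : Type*} [CommRing R] [AddCommGroup H] [Module R H] [Coalgebra R H]
variable (h : HopfMul R H) (rb : RotaBaxter R H h)

/-- the trilinear map `x y z ↦ S(B x) · S y · B z`. -/
noncomputable def P0 : H →ₗ[R] H →ₗ[R] H →ₗ[R] H :=
  LinearMap.mk₂ R (fun x y => (h.mul (h.mul (h.S (rb.B x)) (h.S y))) ∘ₗ rb.B)
    (by intros; ext z; simp [map_add, LinearMap.add_apply])
    (by intros; ext z; simp [map_smul, LinearMap.smul_apply])
    (by intros; ext z; simp [map_add, LinearMap.add_apply])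
    (by intros; ext z; simp [map_smul, LinearMap.smul_apply])

lemma P0_apply (x y z : H) :
    P0 h rb x y z = h.mul (h.mul (h.S (rb.B x)) (h.S y)) (rb.B z) := rfl

/-- The linear version of `T`. -/
noncomputable def Tl : H →ₗ[R] H := Ebil (Ebil ∘ₗ P0 h rb)

lemma sum_eq_Tl (g : H) {ι : Type*} (r : Coalgebra.Repr R g ι)
    {κ : ι → Type*} (r2 : ∀ i : ι, Coalgebra.Repr R (r.right i) (κ i)) :
    ∑ i ∈ r.index, ∑ j ∈ (r2 i).index,
      h.mul (h.mul (h.S (rb.B (r.left i))) (h.S ((r2 i).left j)))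
        (rb.B ((r2 i).right j)) = Tl h rb g := by
  rw [Tl, ← repr_sum (Ebil ∘ₗ P0 h rb) r]
  refine Finset.sum_congr rfl fun i _ => ?_
  rw [LinearMap.comp_apply, ← repr_sum (P0 h rb (r.left i)) (r2 i)]
  rfl

lemma comul_B' (a : H) :
    comul (R := R) (rb.B a) = TensorProduct.map rb.B rb.B (comul (R := R) a) := by
  rw [rb.comul_B a ((Coalgebra.Repr.arbitrary R a).reindex),
    ← ((Coalgebra.Repr.arbitrary R a).reindex).eq]
  rw [map_sum]
  exact Finset.sum_congr rfl fun i _ => by simp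

lemma Ebil_B {M : Type*} [AddCommGroup M] [Module R M]
    (F : H →ₗ[R] H →ₗ[R] M) (a : H) :
    Ebil F (rb.B a) = Ebil (F.compl₁₂ rb.B rb.B) a := by
  rw [Ebil_apply, Ebil_apply, comul_B']
  induction (comul (R := R) a) using TensorProduct.induction_on with
  | zero => simp
  | tmul x y => simp
  | add x y hx hy => simp [map_add, hx, hy]

noncomputable def FBS : H →ₗ[R] H →ₗ[R] H :=
  LinearMap.mk₂ R (fun x y => h.mul (rb.B x) (h.S (rb.B y)))
    (by intros; simp [map_add, LinearMap.add_apply])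
    (by intros; simp [map_smul, LinearMap.smul_apply])
    (by intros; simp [map_add, LinearMap.add_apply])
    (by intros; simp [map_smul, LinearMap.smul_apply])

noncomputable def FSB : H →ₗ[R] H →ₗ[R] H :=
  LinearMap.mk₂ R (fun x y => h.mul (h.S (rb.B x)) (rb.B y))
    (by intros; simp [map_add, LinearMap.add_apply])
    (by intros; simp [map_smul, LinearMap.smul_apply])
    (by intros; simp [map_add, LinearMap.add_apply])
    (by intros; simp [map_smul, LinearMap.smul_apply])

noncomputable def FmS : H →ₗ[R] H →ₗ[R] H :=
  LinearMap.mk₂ R (fun x y => h.mul x (h.S y))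
    (by intros; simp [map_add, LinearMap.add_apply])
    (by intros; simp [map_smul, LinearMap.smul_apply])
    (by intros; simp [map_add, LinearMap.add_apply])
    (by intros; simp [map_smul, LinearMap.smul_apply])

noncomputable def FSm' : H →ₗ[R] H →ₗ[R] H :=
  LinearMap.mk₂ R (fun x y => h.mul (h.S x) y)
    (by intros; simp [map_add, LinearMap.add_apply])
    (by intros; simp [map_smul, LinearMap.smul_apply])
    (by intros; simp [map_add, LinearMap.add_apply])
    (by intros; simp [map_smul, LinearMap.smul_apply])

lemma K3 (g : H) : Ebil (FmS h) g = counit (R := R) g • h.one := by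
  have e := h.S_mul_right g ((Coalgebra.Repr.arbitrary R g).reindex)
  rw [← repr_sum (FmS h) ((Coalgebra.Repr.arbitrary R g).reindex)]
  simpa [FmS] using e

lemma K3' (g : H) : Ebil (FSm' h) g = counit (R := R) g • h.one := by
  have e := h.S_mul_left g ((Coalgebra.Repr.arbitrary R g).reindex)
  rw [← repr_sum (FSm' h) ((Coalgebra.Repr.arbitrary R g).reindex)]
  simpa [FSm'] using e

lemma K1 (g : H) : Ebil (FBS h rb) g = counit (R := R) g • h.one := by
  have e1 : Ebil (FBS h rb) g = Ebil (FmS h) (rb.B g) := by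
    rw [Ebil_B]
    exact Ebil_congr g fun x y => by simp [FBS, FmS]
  rw [e1, K3, rb.counit_B]

lemma K2 (g : H) : Ebil (FSB h rb) g = counit (R := R) g • h.one := by
  have e1 : Ebil (FSB h rb) g = Ebil (FSm' h) (rb.B g) := by
    rw [Ebil_B]
    exact Ebil_congr g fun x y => by simp [FSB, FSm']
  rw [e1, K3', rb.counit_B]

/-- a representation of `1`. -/
noncomputable def reprOne : Coalgebra.Repr R h.one PUnit where
  index := (Finset.univ : Finset PUnit)
  left := fun _ => h.one
  right := fun _ => h.one
  eq := by simpa using h.comul_one.symm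

lemma B_one : rb.B h.one = h.one := by
  have e1 : counit (R := R) (rb.B h.one) = 1 := by rw [rb.counit_B, h.counit_one]
  have cB1 : comul (R := R) (rb.B h.one) = rb.B h.one ⊗ₜ[R] rb.B h.one := by
    rw [comul_B' h rb, h.comul_one]
    simp
  have eval : ∀ F : H →ₗ[R] H →ₗ[R] H, Ebil F (rb.B h.one) = F (rb.B h.one) (rb.B h.one) := by
    intro F
    rw [Ebil_apply, cB1]
    simp
  have s1 : h.mul (rb.B h.one) (h.S (rb.B h.one)) = h.one := by
    have := eval (FmS h)
    rw [K3 h, e1, one_smul] at this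
    simpa [FmS] using this.symm
  have s2 : h.mul (h.S (rb.B h.one)) (rb.B h.one) = h.one := by
    have := eval (FSm' h)
    rw [K3' h, e1, one_smul] at this
    simpa [FSm'] using this.symm
  have q : h.mul (rb.B h.one) (rb.B h.one) = rb.B h.one := by
    have e := rb.rb h.one h.one (reprOne h)
      (fun _ => reprOne h)
    simpa [reprOne, h.one_mul, h.mul_one, s1] using e
  calc rb.B h.one = h.mul h.one (rb.B h.one) := (h.one_mul _).symm
    _ = h.mul (h.mul (h.S (rb.B h.one)) (rb.B h.one)) (rb.B h.one) := by rw [s2]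
    _ = h.mul (h.S (rb.B h.one)) (h.mul (rb.B h.one) (rb.B h.one)) := h.mul_assoc _ _ _
    _ = h.mul (h.S (rb.B h.one)) (rb.B h.one) := by rw [q]
    _ = h.one := s2

end Hopf

section Main
variable {R H : Type*} [CommRing R] [AddCommGroup H] [Module R H] [Coalgebra R H]
variable (h : HopfMul R H) (rb : RotaBaxter R H h)

/-- `F₁ x y = B x · B (Tl y)`. -/
noncomputable def F₁ : H →ₗ[R] H →ₗ[R] H :=
  LinearMap.mk₂ R (fun x y => h.mul (rb.B x) (rb.B (Tl h rb y)))
    (by intros; simp [map_add, LinearMap.add_apply])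
    (by intros; simp [map_smul, LinearMap.smul_apply])
    (by intros; simp [map_add, LinearMap.add_apply])
    (by intros; simp [map_smul, LinearMap.smul_apply])

/-- 4-linear gadget, order (u,t,v,w), value `B (((u·B v)·Tl t)·S (B w))`. -/
noncomputable def A : H →ₗ[R] H →ₗ[R] H →ₗ[R] H →ₗ[R] H :=
  LinearMap.mk₂ R (fun u t => LinearMap.mk₂ R
      (fun v w => rb.B (h.mul (h.mul (h.mul u (rb.B v)) (Tl h rb t)) (h.S (rb.B w))))
      (by intros; simp [map_add, LinearMap.add_apply])
      (by intros; simp [map_smul, LinearMap.smul_apply])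
      (by intros; simp [map_add, LinearMap.add_apply])
      (by intros; simp [map_smul, LinearMap.smul_apply]))
    (by intros; refine LinearMap.ext₂ fun v w => ?_
        simp [map_add, LinearMap.add_apply])
    (by intros; refine LinearMap.ext₂ fun v w => ?_
        simp [map_smul, LinearMap.smul_apply])
    (by intros; refine LinearMap.ext₂ fun v w => ?_
        simp [map_add, LinearMap.add_apply])
    (by intros; refine LinearMap.ext₂ fun v w => ?_
        simp [map_smul, LinearMap.smul_apply])

/-- order (u,v,w,t), same value. -/
noncomputable def A2 : H →ₗ[R] H →ₗ[R] H →ₗ[R] H →ₗ[R] H :=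
  LinearMap.mk₂ R (fun u v => LinearMap.mk₂ R
      (fun w t => rb.B (h.mul (h.mul (h.mul u (rb.B v)) (Tl h rb t)) (h.S (rb.B w))))
      (by intros; simp [map_add, LinearMap.add_apply])
      (by intros; simp [map_smul, LinearMap.smul_apply])
      (by intros; simp [map_add, LinearMap.add_apply])
      (by intros; simp [map_smul, LinearMap.smul_apply]))
    (by intros; refine LinearMap.ext₂ fun v w => ?_
        simp [map_add, LinearMap.add_apply])
    (by intros; refine LinearMap.ext₂ fun v w => ?_
        simp [map_smul, LinearMap.smul_apply])
    (by intros; refine LinearMap.ext₂ fun v w => ?_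
        simp [map_add, LinearMap.add_apply])
    (by intros; refine LinearMap.ext₂ fun v w => ?_
        simp [map_smul, LinearMap.smul_apply])

/-- order (u,v,t,w), same value. -/
noncomputable def A3 : H →ₗ[R] H →ₗ[R] H →ₗ[R] H →ₗ[R] H :=
  LinearMap.mk₂ R (fun u v => LinearMap.mk₂ R
      (fun t w => rb.B (h.mul (h.mul (h.mul u (rb.B v)) (Tl h rb t)) (h.S (rb.B w))))
      (by intros; simp [map_add, LinearMap.add_apply])
      (by intros; simp [map_smul, LinearMap.smul_apply])
      (by intros; simp [map_add, LinearMap.add_apply])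
      (by intros; simp [map_smul, LinearMap.smul_apply]))
    (by intros; refine LinearMap.ext₂ fun v w => ?_
        simp [map_add, LinearMap.add_apply])
    (by intros; refine LinearMap.ext₂ fun v w => ?_
        simp [map_smul, LinearMap.smul_apply])
    (by intros; refine LinearMap.ext₂ fun v w => ?_
        simp [map_add, LinearMap.add_apply])
    (by intros; refine LinearMap.ext₂ fun v w => ?_
        simp [map_smul, LinearMap.smul_apply])

/-- order (u,w,v,t), same value. -/
noncomputable def A4 : H →ₗ[R] H →ₗ[R] H →ₗ[R] H →ₗ[R] H :=
  LinearMap.mk₂ R (fun u w => LinearMap.mk₂ R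
      (fun v t => rb.B (h.mul (h.mul (h.mul u (rb.B v)) (Tl h rb t)) (h.S (rb.B w))))
      (by intros; simp [map_add, LinearMap.add_apply])
      (by intros; simp [map_smul, LinearMap.smul_apply])
      (by intros; simp [map_add, LinearMap.add_apply])
      (by intros; simp [map_smul, LinearMap.smul_apply]))
    (by intros; refine LinearMap.ext₂ fun v w => ?_
        simp [map_add, LinearMap.add_apply])
    (by intros; refine LinearMap.ext₂ fun v w => ?_
        simp [map_smul, LinearMap.smul_apply])
    (by intros; refine LinearMap.ext₂ fun v w => ?_
        simp [map_add, LinearMap.add_apply])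
    (by intros; refine LinearMap.ext₂ fun v w => ?_
        simp [map_smul, LinearMap.smul_apply])

/-- order (u,w,v,t), value `B ((u·(S v · B t))·S (B w))`. -/
noncomputable def A5 : H →ₗ[R] H →ₗ[R] H →ₗ[R] H →ₗ[R] H :=
  LinearMap.mk₂ R (fun u w => LinearMap.mk₂ R
      (fun v t => rb.B (h.mul (h.mul u (h.mul (h.S v) (rb.B t))) (h.S (rb.B w))))
      (by intros; simp [map_add, LinearMap.add_apply])
      (by intros; simp [map_smul, LinearMap.smul_apply])
      (by intros; simp [map_add, LinearMap.add_apply])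
      (by intros; simp [map_smul, LinearMap.smul_apply]))
    (by intros; refine LinearMap.ext₂ fun v w => ?_
        simp [map_add, LinearMap.add_apply])
    (by intros; refine LinearMap.ext₂ fun v w => ?_
        simp [map_smul, LinearMap.smul_apply])
    (by intros; refine LinearMap.ext₂ fun v w => ?_
        simp [map_add, LinearMap.add_apply])
    (by intros; refine LinearMap.ext₂ fun v w => ?_
        simp [map_smul, LinearMap.smul_apply])

/-- order (u,v,t,w), value `B ((u·(S v · B t))·S (B w))`. -/
noncomputable def A6 : H →ₗ[R] H →ₗ[R] H →ₗ[R] H →ₗ[R] H :=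
  LinearMap.mk₂ R (fun u v => LinearMap.mk₂ R
      (fun t w => rb.B (h.mul (h.mul u (h.mul (h.S v) (rb.B t))) (h.S (rb.B w))))
      (by intros; simp [map_add, LinearMap.add_apply])
      (by intros; simp [map_smul, LinearMap.smul_apply])
      (by intros; simp [map_add, LinearMap.add_apply])
      (by intros; simp [map_smul, LinearMap.smul_apply]))
    (by intros; refine LinearMap.ext₂ fun v w => ?_
        simp [map_add, LinearMap.add_apply])
    (by intros; refine LinearMap.ext₂ fun v w => ?_
        simp [map_smul, LinearMap.smul_apply])
    (by intros; refine LinearMap.ext₂ fun v w => ?_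
        simp [map_add, LinearMap.add_apply])
    (by intros; refine LinearMap.ext₂ fun v w => ?_
        simp [map_smul, LinearMap.smul_apply])

/-- `q s ↦ S q · B s`. -/
noncomputable def FSmB : H →ₗ[R] H →ₗ[R] H :=
  LinearMap.mk₂ R (fun q s => h.mul (h.S q) (rb.B s))
    (by intros; simp [map_add, LinearMap.add_apply])
    (by intros; simp [map_smul, LinearMap.smul_apply])
    (by intros; simp [map_add, LinearMap.add_apply])
    (by intros; simp [map_smul, LinearMap.smul_apply])

/-- `v t ↦ B v · Tl t`. -/
noncomputable def Fks : H →ₗ[R] H →ₗ[R] H :=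
  LinearMap.mk₂ R (fun v t => h.mul (rb.B v) (Tl h rb t))
    (by intros; simp [map_add, LinearMap.add_apply])
    (by intros; simp [map_smul, LinearMap.smul_apply])
    (by intros; simp [map_add, LinearMap.add_apply])
    (by intros; simp [map_smul, LinearMap.smul_apply])

noncomputable def Kp : H →ₗ[R] H →ₗ[R] H →ₗ[R] H :=
  LinearMap.mk₂ R (fun v p => (h.mul (rb.B v)) ∘ₗ Ebil (P0 h rb p))
    (by intros; ext z; simp [map_add, LinearMap.add_apply])
    (by intros; ext z; simp [map_smul, LinearMap.smul_apply])
    (by intros; ext z; simp [map_add, LinearMap.add_apply])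
    (by intros; ext z; simp [map_smul, LinearMap.smul_apply])

noncomputable def Kq : H →ₗ[R] H →ₗ[R] H →ₗ[R] H :=
  LinearMap.mk₂ R (fun s' v => ((Kp h rb v).flip) s')
    (by intros; ext z; simp [map_add, LinearMap.add_apply])
    (by intros; ext z; simp [map_smul, LinearMap.smul_apply])
    (by intros; ext z; simp [map_add, LinearMap.add_apply])
    (by intros; ext z; simp [map_smul, LinearMap.smul_apply])

/-- the key collapsing lemma: `∑ B(g₁)·Tl(g₂) = ∑ S(g₁)·B(g₂)`. -/
lemma KS (g : H) : Ebil (Fks h rb) g = Ebil (FSmB h rb) g := by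
  -- step k1 : expand Tl
  have k1 : Ebil (Fks h rb) g = Ebil (Ebil ∘ₗ Kp h rb) g := by
    refine Ebil_congr g fun v t => ?_
    have : Fks h rb v t = h.mul (rb.B v) (Ebil (Ebil ∘ₗ P0 h rb) t) := rfl
    rw [this, ← Ebil_map (h.mul (rb.B v)) (Ebil ∘ₗ P0 h rb) t]
    refine Ebil_congr t fun p s' => by simp [Kp, LinearMap.compr₂_apply]
  -- step k2 : associate the comultiplications
  have k2 : Ebil ((Ebil ∘ₗ Kq h rb).flip) g = Ebil (Ebil ∘ₗ Kp h rb) g := by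
    refine Ebil_assoc (Kp h rb) (Kq h rb) (fun x y z => by simp [Kp, Kq]) g
      (fun x y => rfl) (fun x y => by simp)
  -- step k3+k4 : collapse
  have k3 : ∀ w s', ((Ebil ∘ₗ Kq h rb).flip) w s'
      = counit (R := R) w • (Ebil (FSmB h rb)) s' := by
    intro w s'
    have e1 : ((Ebil ∘ₗ Kq h rb).flip) w s' = Ebil (Kq h rb s') w := by simp
    have e2 : Ebil (Kq h rb s') w
        = Ebil ((FBS h rb).compr₂ (h.mul.flip (Ebil (FSmB h rb) s'))) w := by
      refine Ebil_congr w fun v p => ?_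
      have e3 : Kq h rb s' v p = h.mul (rb.B v) (Ebil (P0 h rb p) s') := by simp [Kq, Kp]
      have e4 : h.mul (rb.B v) (Ebil (P0 h rb p) s')
          = Ebil ((P0 h rb p).compr₂ (h.mul (rb.B v))) s' :=
        (Ebil_map (h.mul (rb.B v)) (P0 h rb p) s').symm
      have e5 : Ebil ((P0 h rb p).compr₂ (h.mul (rb.B v))) s'
          = Ebil ((FSmB h rb).compr₂ (h.mul (h.mul (rb.B v) (h.S (rb.B p))))) s' := by
        refine Ebil_congr s' fun q s => ?_
        simp only [LinearMap.compr₂_apply, P0_apply, FSmB, LinearMap.mk₂_apply]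
        rw [h.mul_assoc (h.S (rb.B p)) (h.S q) (rb.B s), ← h.mul_assoc (rb.B v)]
      rw [e3, e4, e5, Ebil_map]
      simp [FBS]
    rw [e1, e2, Ebil_map, K1]
    simp [map_smul, h.one_mul]
  have k4 : Ebil ((Ebil ∘ₗ Kq h rb).flip) g = Ebil (FSmB h rb) g :=
    Ebil_eps_left (Ebil (FSmB h rb)) g k3
  rw [k1, ← k2, k4]

lemma KSctx (g : H) (L : H →ₗ[R] H) :
    Ebil ((Fks h rb).compr₂ L) g = Ebil ((FSmB h rb).compr₂ L) g := by
  rw [Ebil_map, Ebil_map, KS]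

/-- part (i) in `Ebil` form. -/
lemma key (hc : Cocomm R H) (a : H) :
    Ebil (F₁ h rb) a = counit (R := R) a • h.one := by
  classical
  -- step 1 : Rota-Baxter expansion
  set J : H →ₗ[R] H →ₗ[R] H →ₗ[R] H :=
    (LinearMap.llcomp R H (H →ₗ[R] H →ₗ[R] H) (H →ₗ[R] H) Ebil) ∘ₗ (A h rb).flip with hJ
  have hJa : ∀ t u s, J t u s = Ebil (A h rb u t) s := fun t u s => rfl
  set P : H →ₗ[R] H →ₗ[R] H →ₗ[R] H :=
    (LinearMap.lflip (R₀ := R)).toLinearMap ∘ₗ (LinearMap.llcomp R H (H →ₗ[R] H →ₗ[R] H) (H →ₗ[R] H) Ebil)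
      ∘ₗ (A h rb) with hP
  have hPa : ∀ u s t, P u s t = Ebil (A h rb u t) s := fun u s t => rfl
  have step1 : Ebil (F₁ h rb) a = Ebil ((Ebil ∘ₗ J).flip) a := by
    refine Ebil_congr a fun x t => ?_
    have e := rb.rb x (Tl h rb t) ((Coalgebra.Repr.arbitrary R x).reindex)
      (fun i => (Coalgebra.Repr.arbitrary R _).reindex)
    have e2 : F₁ h rb x t = ∑ i ∈ ((Coalgebra.Repr.arbitrary R x).reindex).index,
        Ebil (A h rb (((Coalgebra.Repr.arbitrary R x).reindex).left i) t)
          (((Coalgebra.Repr.arbitrary R x).reindex).right i) := by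
      rw [show F₁ h rb x t = h.mul (rb.B x) (rb.B (Tl h rb t)) from rfl, e]
      refine Finset.sum_congr rfl fun i _ => ?_
      rw [← repr_sum (A h rb (((Coalgebra.Repr.arbitrary R x).reindex).left i) t)
        ((Coalgebra.Repr.arbitrary R _).reindex)]
      exact Finset.sum_congr rfl fun j _ => by simp [A]
    rw [e2]
    have e3 : ((Ebil ∘ₗ J).flip) x t = Ebil (J t) x := by simp
    rw [e3, ← repr_sum (J t) ((Coalgebra.Repr.arbitrary R x).reindex)]
    exact Finset.sum_congr rfl fun i _ => rfl
  -- step 2 : top-level coassociativity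
  have step2 : Ebil ((Ebil ∘ₗ J).flip) a = Ebil (Ebil ∘ₗ P) a := by
    exact Ebil_assoc P J (fun x y z => by rw [hJa, hPa]) a
      (fun x y => rfl) (fun x y => by simp)
  -- step 3 : inner coassociativity
  have step3 : Ebil (Ebil ∘ₗ P) a
      = Ebil (Ebil ∘ₗ (LinearMap.llcomp R H (H →ₗ[R] H →ₗ[R] H) (H →ₗ[R] H) Ebil)
          ∘ₗ A2 h rb) a := by
    refine Ebil_congr a fun u y => ?_
    exact Ebil_assoc (A2 h rb u) (A h rb u) (fun x y z => by simp [A, A2]) y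
      (fun x y => rfl) (fun x y => hPa u x y)
  -- step 4 : cocommutativity swap
  have step4 : Ebil (Ebil ∘ₗ (LinearMap.llcomp R H (H →ₗ[R] H →ₗ[R] H) (H →ₗ[R] H) Ebil)
          ∘ₗ A2 h rb) a
      = Ebil (Ebil ∘ₗ (LinearMap.llcomp R H (H →ₗ[R] H →ₗ[R] H) (H →ₗ[R] H) Ebil)
          ∘ₗ A3 h rb) a := by
    refine Ebil_congr a fun u y => ?_
    exact Ebil_congr y fun v z => Ebil_comm hc z (fun x y => by simp [A2, A3])
  -- step 5 : inner coassociativity back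
  have step5 : Ebil (Ebil ∘ₗ (LinearMap.llcomp R H (H →ₗ[R] H →ₗ[R] H) (H →ₗ[R] H) Ebil)
          ∘ₗ A3 h rb) a
      = Ebil (Ebil ∘ₗ (LinearMap.lflip (R₀ := R)).toLinearMap
          ∘ₗ (LinearMap.llcomp R H (H →ₗ[R] H →ₗ[R] H) (H →ₗ[R] H) Ebil) ∘ₗ A4 h rb) a := by
    refine Ebil_congr a fun u y => ?_
    exact (Ebil_assoc (A3 h rb u) (A4 h rb u) (fun x y z => by simp [A3, A4]) y
      (fun x y => rfl) (fun x y => by simp)).symm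
  -- step 6 : KS collapse
  have step6 : Ebil (Ebil ∘ₗ (LinearMap.lflip (R₀ := R)).toLinearMap
          ∘ₗ (LinearMap.llcomp R H (H →ₗ[R] H →ₗ[R] H) (H →ₗ[R] H) Ebil) ∘ₗ A4 h rb) a
      = Ebil (Ebil ∘ₗ (LinearMap.lflip (R₀ := R)).toLinearMap
          ∘ₗ (LinearMap.llcomp R H (H →ₗ[R] H →ₗ[R] H) (H →ₗ[R] H) Ebil) ∘ₗ A5 h rb) a := by
    refine Ebil_congr a fun u y => ?_
    refine Ebil_congr y fun s w => ?_
    show Ebil (A4 h rb u w) s = Ebil (A5 h rb u w) s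
    set L : H →ₗ[R] H := rb.B ∘ₗ (h.mul.flip (h.S (rb.B w))) ∘ₗ (h.mul u) with hL
    have e1 : Ebil (A4 h rb u w) s = Ebil ((Fks h rb).compr₂ L) s := by
      refine Ebil_congr s fun v t => ?_
      simp only [A4, Fks, LinearMap.mk₂_apply, LinearMap.compr₂_apply, hL,
        LinearMap.comp_apply, LinearMap.flip_apply]
      rw [h.mul_assoc u (rb.B v) (Tl h rb t)]
    have e3 : Ebil ((FSmB h rb).compr₂ L) s = Ebil (A5 h rb u w) s := by
      refine Ebil_congr s fun v t => ?_
      simp only [A5, FSmB, LinearMap.mk₂_apply, LinearMap.compr₂_apply, hL,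
        LinearMap.comp_apply, LinearMap.flip_apply]
    rw [e1, KSctx, e3]
  -- step 7 : coassociativity forward again
  have step7 : Ebil (Ebil ∘ₗ (LinearMap.lflip (R₀ := R)).toLinearMap
          ∘ₗ (LinearMap.llcomp R H (H →ₗ[R] H →ₗ[R] H) (H →ₗ[R] H) Ebil) ∘ₗ A5 h rb) a
      = Ebil (Ebil ∘ₗ (LinearMap.llcomp R H (H →ₗ[R] H →ₗ[R] H) (H →ₗ[R] H) Ebil)
          ∘ₗ A6 h rb) a := by
    refine Ebil_congr a fun u y => ?_
    exact Ebil_assoc (A6 h rb u) (A5 h rb u) (fun x y z => by simp [A5, A6]) y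
      (fun x y => rfl) (fun x y => by simp)
  -- step 8 : antipode collapse
  have step8 : Ebil (Ebil ∘ₗ (LinearMap.llcomp R H (H →ₗ[R] H →ₗ[R] H) (H →ₗ[R] H) Ebil)
          ∘ₗ A6 h rb) a = Ebil ((FmS h).compr₂ rb.B) a := by
    refine Ebil_congr a fun u y => ?_
    have inner : ∀ v z, (Ebil ∘ₗ A6 h rb u) v z
        = counit (R := R) z • (rb.B ∘ₗ (h.mul u) ∘ₗ h.S) v := by
      intro v z
      set L2 : H →ₗ[R] H := rb.B ∘ₗ (h.mul (h.mul u (h.S v))) with hL2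
      have i2 : Ebil (A6 h rb u v) z = Ebil ((FBS h rb).compr₂ L2) z := by
        refine Ebil_congr z fun t w => ?_
        simp only [A6, FBS, LinearMap.mk₂_apply, LinearMap.compr₂_apply, hL2,
          LinearMap.comp_apply]
        rw [← h.mul_assoc u (h.S v) (rb.B t),
          h.mul_assoc (h.mul u (h.S v)) (rb.B t) (h.S (rb.B w))]
      have i3 : (Ebil ∘ₗ A6 h rb u) v z = Ebil (A6 h rb u v) z := rfl
      rw [i3, i2, Ebil_map, K1, map_smul, hL2]
      simp [h.mul_one]
    have e := Ebil_eps_right (rb.B ∘ₗ (h.mul u) ∘ₗ h.S) y inner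
    have l2 : (Ebil ∘ₗ (LinearMap.llcomp R H (H →ₗ[R] H →ₗ[R] H) (H →ₗ[R] H) Ebil)
        ∘ₗ A6 h rb) u y = Ebil (Ebil ∘ₗ A6 h rb u) y := rfl
    rw [l2, e]
    simp [FmS]
  -- step 9 : final antipode collapse
  have step9 : Ebil ((FmS h).compr₂ rb.B) a = counit (R := R) a • h.one := by
    rw [Ebil_map, K3, map_smul, B_one]
  rw [step1, step2, step3, step4, step5, step6, step7, step8, step9]

/-- part (ii) : `B ∘ Tl = S ∘ B`. -/
lemma BTl (hc : Cocomm R H) (a : H) : rb.B (Tl h rb a) = h.S (rb.B a) := by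
  classical
  set Pii : H →ₗ[R] H →ₗ[R] H →ₗ[R] H :=
    LinearMap.mk₂ R (fun x u => ((F₁ h rb).compr₂ (h.mul (h.S (rb.B x)))) u)
      (by intros; ext z; simp [map_add, LinearMap.add_apply])
      (by intros; ext z; simp [map_smul, LinearMap.smul_apply])
      (by intros; ext z; simp [map_add])
      (by intros; ext z; simp [map_smul]) with hPii
  set Qii : H →ₗ[R] H →ₗ[R] H →ₗ[R] H :=
    LinearMap.mk₂ R (fun z x => ((Pii x).flip) z)
      (by intros; ext w; simp [map_add, LinearMap.add_apply])
      (by intros; ext w; simp [map_smul, LinearMap.smul_apply])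
      (by intros; ext w; simp [map_add, LinearMap.add_apply])
      (by intros; ext w; simp [map_smul, LinearMap.smul_apply]) with hQii
  set Gii : H →ₗ[R] H →ₗ[R] H :=
    LinearMap.mk₂ R (fun x y => h.mul (h.S (rb.B x)) (Ebil (F₁ h rb) y))
      (by intros; simp [map_add, LinearMap.add_apply])
      (by intros; simp [map_smul, LinearMap.smul_apply])
      (by intros; simp [map_add, LinearMap.add_apply])
      (by intros; simp [map_smul, LinearMap.smul_apply]) with hGii
  have way1 : Ebil Gii a = h.S (rb.B a) := by
    refine Ebil_eps_right (h.S ∘ₗ rb.B) a fun x y => ?_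
    simp only [hGii, LinearMap.mk₂_apply, key h rb hc y, map_smul, LinearMap.comp_apply]
    rw [h.mul_one]
  have hF : ∀ x y, Gii x y = Ebil (Pii x) y := by
    intro x y
    have : Gii x y = h.mul (h.S (rb.B x)) (Ebil (F₁ h rb) y) := by simp [hGii]
    rw [this, ← Ebil_map (h.mul (h.S (rb.B x))) (F₁ h rb) y]
    exact Ebil_congr y fun u v => by simp [hPii]
  have way2' : Ebil ((Ebil ∘ₗ Qii).flip) a = Ebil Gii a := by
    refine Ebil_assoc Pii Qii (fun x y z => by simp [hQii]) a hF (fun x y => by simp)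
  have way2 : Ebil ((Ebil ∘ₗ Qii).flip) a = rb.B (Tl h rb a) := by
    refine Ebil_eps_left (rb.B ∘ₗ Tl h rb) a fun w z => ?_
    have e1 : ((Ebil ∘ₗ Qii).flip) w z = Ebil (Qii z) w := by simp
    have e2 : Ebil (Qii z) w
        = Ebil ((FSB h rb).compr₂ (h.mul.flip (rb.B (Tl h rb z)))) w := by
      refine Ebil_congr w fun x y => ?_
      simp only [hQii, hPii, LinearMap.mk₂_apply, LinearMap.flip_apply,
        LinearMap.compr₂_apply, FSB, F₁]
      rw [← h.mul_assoc]
    rw [e1, e2, Ebil_map, K2]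
    simp [h.one_mul]
  rw [← way2, way2', way1]

end Main

/-- For a cocommutative Rota-Baxter Hopf algebra with
`T(g) := S(B(g₍₁₎))·S(g₍₂₎)·B(g₍₃₎)`: `B(h₍₁₎)·B(T(h₍₂₎)) = ε(h)1` and `B∘T = S∘B`. -/
theorem rotaBaxter_T_identities (h : HopfMul R H) (hc : Cocomm R H)
    (rb : RotaBaxter R H h) (T : H → H)
    (hT : ∀ (g : H) {ι : Type*} (r : Coalgebra.Repr R g ι)
        {κ : ι → Type*} (r2 : ∀ i : ι, Coalgebra.Repr R (r.right i) (κ i)),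
      T g = ∑ i ∈ r.index, ∑ j ∈ (r2 i).index,
        h.mul (h.mul (h.S (rb.B (r.left i))) (h.S ((r2 i).left j)))
          (rb.B ((r2 i).right j))) :
    (∀ (a : H) {ι : Type*} (r : Coalgebra.Repr R a ι),
      ∑ i ∈ r.index, h.mul (rb.B (r.left i)) (rb.B (T (r.right i))) =
        counit (R := R) a • h.one) ∧
    (∀ x : H, rb.B (T x) = h.S (rb.B x)) := by
  have hTeq : ∀ g : H, T g = Tl h rb g := fun g => by
    rw [hT g ((Coalgebra.Repr.arbitrary R g).reindex)
      (fun i => (Coalgebra.Repr.arbitrary R _).reindex)]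
    exact sum_eq_Tl h rb g _ _
  constructor
  · intro a _ r
    calc ∑ i ∈ r.index, h.mul (rb.B (r.left i)) (rb.B (T (r.right i)))
        = ∑ i ∈ r.index, F₁ h rb (r.left i) (r.right i) :=
          Finset.sum_congr rfl fun i _ => by rw [hTeq]; rfl
      _ = Ebil (F₁ h rb) a := repr_sum _ r
      _ = counit (R := R) a • h.one := key h rb hc a
  · intro x
    rw [hTeq x]
    exact BTl h rb hc x
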